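/- Let K be a convex cone in a finite-dimensional real vector space H of dimension N, let L ⊆ H be a subspace of dimension n, set K' = K ∩ L, and let x generate an extreme ray of K'. Then the minimal face of K containing x has dimension at most N − n + 1. -/

import Mathlib

/-- `F` is a face of the convex cone `K` (as sets): `F ⊆ K`, and whenever a sum of two
elements of `K` lies in `F`, both summands lie in `F`. -/
def IsFaceOf {V : Type*} [AddCommGroup V] (K F : Set V) : Prop :=
  F ⊆ K ∧ ∀ a ∈ K, ∀ b ∈ K, a + b ∈ F → a ∈ F ∧ b ∈ F

theorem stmt17 {H : Type*} [AddCommGroup H] [Module ℝ H] [FiniteDimensional ℝ H]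
    (N : ℕ) (hN : Module.finrank ℝ H = N)
    (K : ConvexCone ℝ H) (L : Submodule ℝ H) (n : ℕ) (hn : Module.finrank ℝ L = n)
    (x : H) (hx0 : x ≠ 0) (hxK : x ∈ K) (hxL : x ∈ L)
    -- x generates an extreme ray of K' = K ∩ L: the ray through x is a face of K'
    (hray : IsFaceOf ((K : Set H) ∩ (L : Set H)) {y | ∃ c : ℝ, 0 ≤ c ∧ y = c • x}) :
    Module.finrank ℝ (Submodule.span ℝ
        (⋂₀ {F : Set H | IsFaceOf (K : Set H) F ∧ x ∈ F})) ≤ N - n + 1 := by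
  classical
  set F₀ : Set H := ⋂₀ {F : Set H | IsFaceOf (K : Set H) F ∧ x ∈ F} with hF₀
  -- The "visible from x" set is a face containing x
  set G : Set H := {z | z ∈ (K : Set H) ∧ ∃ ε : ℝ, 0 < ε ∧ x - ε • z ∈ K} with hG
  have hGface : IsFaceOf (K : Set H) G ∧ x ∈ G := by
    refine ⟨⟨fun z hz => hz.1, ?_⟩, hxK, 1/2, by norm_num, ?_⟩
    · intro a ha b hb hab
      obtain ⟨-, ε, hε, hxab⟩ := hab
      constructor
      · refine ⟨ha, ε, hε, ?_⟩
        have : x - ε • (a + b) + ε • b ∈ K := K.add_mem hxab (K.smul_mem hε hb)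
        convert this using 1
        rw [smul_add]; abel
      · refine ⟨hb, ε, hε, ?_⟩
        have : x - ε • (a + b) + ε • a ∈ K := K.add_mem hxab (K.smul_mem hε ha)
        convert this using 1
        rw [smul_add]; abel
    · have : (1 - 1/2 : ℝ) • x ∈ K := K.smul_mem (by norm_num) hxK
      convert this using 1
      rw [sub_smul, one_smul]
  have hF₀G : F₀ ⊆ G := Set.sInter_subset_of_mem hGface
  have hF₀K : F₀ ⊆ (K : Set H) := fun z hz => (hF₀G hz).1
  -- every element of span F₀ can be added/subtracted from x within K
  have key : ∀ y ∈ Submodule.span ℝ F₀, ∃ ε : ℝ, 0 < ε ∧ x + ε • y ∈ K ∧ x - ε • y ∈ K := by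
    intro y hy
    induction hy using Submodule.span_induction with
    | mem z hz =>
      obtain ⟨hzK, ε, hε, hxz⟩ := hF₀G hz
      exact ⟨ε, hε, K.add_mem hxK (K.smul_mem hε hzK), hxz⟩
    | zero => exact ⟨1, one_pos, by simpa using hxK, by simpa using hxK⟩
    | add y₁ y₂ h₁ h₂ ih₁ ih₂ =>
      obtain ⟨ε₁, hε₁, ha₁, hs₁⟩ := ih₁
      obtain ⟨ε₂, hε₂, ha₂, hs₂⟩ := ih₂
      -- x + t y ∈ K for 0 < t ≤ ε when x + ε y ∈ K : convex combination
      have comb : ∀ (ε t : ℝ) (y : H), 0 < t → t ≤ ε → x + ε • y ∈ K → x + t • y ∈ K := by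
        intro ε t y ht htε h
        have hε : (0:ℝ) < ε := lt_of_lt_of_le ht htε
        have h1 : (0:ℝ) < 1 - t/ε ∨ (0:ℝ) = 1 - t/ε := by
          rcases lt_or_eq_of_le (div_le_one_of_le₀ htε hε.le) with h | h
          · left; linarith
          · right; linarith
        have hmem : (1 - t/ε) • x + (t/ε) • (x + ε • y) ∈ K := by
          rcases h1 with h1 | h1
          · exact K.add_mem (K.smul_mem h1 hxK) (K.smul_mem (div_pos ht hε) h)
          · rw [← h1, zero_smul, zero_add]
            exact K.smul_mem (div_pos ht hε) h
        convert hmem using 1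
        rw [smul_add, sub_smul, one_smul, smul_smul]
        field_simp
        abel
      refine ⟨min ε₁ ε₂ / 2, by positivity, ?_, ?_⟩
      · have m1 : x + (min ε₁ ε₂) • y₁ ∈ K :=
          comb ε₁ _ _ (lt_min hε₁ hε₂) (min_le_left _ _) ha₁
        have m2 : x + (min ε₁ ε₂) • y₂ ∈ K :=
          comb ε₂ _ _ (lt_min hε₁ hε₂) (min_le_right _ _) ha₂
        have : (1/2 : ℝ) • (x + (min ε₁ ε₂) • y₁) + (1/2 : ℝ) • (x + (min ε₁ ε₂) • y₂) ∈ K :=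
          K.add_mem (K.smul_mem (by norm_num) m1) (K.smul_mem (by norm_num) m2)
        convert this using 1
        module
      · have m1 : x + (min ε₁ ε₂) • (-y₁) ∈ K := by
          refine comb ε₁ _ _ (lt_min hε₁ hε₂) (min_le_left _ _) ?_
          convert hs₁ using 1; rw [smul_neg, sub_eq_add_neg]
        have m2 : x + (min ε₁ ε₂) • (-y₂) ∈ K := by
          refine comb ε₂ _ _ (lt_min hε₁ hε₂) (min_le_right _ _) ?_
          convert hs₂ using 1; rw [smul_neg, sub_eq_add_neg]
        have : (1/2 : ℝ) • (x + (min ε₁ ε₂) • (-y₁)) + (1/2 : ℝ) • (x + (min ε₁ ε₂) • (-y₂)) ∈ K :=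
          K.add_mem (K.smul_mem (by norm_num) m1) (K.smul_mem (by norm_num) m2)
        convert this using 1
        module
    | smul c y h ih =>
      obtain ⟨ε, hε, ha, hs⟩ := ih
      rcases lt_trichotomy c 0 with hc | hc | hc
      · have hkey : ε / (-c) * c = -ε := by have hc' : c ≠ 0 := ne_of_lt hc; field_simp
        refine ⟨ε / (-c), div_pos hε (neg_pos.mpr hc), ?_, ?_⟩
        · rw [smul_smul, hkey, neg_smul, ← sub_eq_add_neg]; exact hs
        · rw [smul_smul, hkey, neg_smul, sub_neg_eq_add]; exact ha
      · refine ⟨1, one_pos, ?_, ?_⟩ <;> simp [hc, hxK]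
      · refine ⟨ε / c, div_pos hε hc, ?_, ?_⟩
        · rw [smul_smul, div_mul_cancel₀ _ (ne_of_gt hc)]; exact ha
        · rw [smul_smul, div_mul_cancel₀ _ (ne_of_gt hc)]; exact hs
  -- span F₀ ⊓ L ≤ span {x}
  have hspan : Submodule.span ℝ F₀ ⊓ L ≤ Submodule.span ℝ {x} := by
    rintro y ⟨hyS, hyL⟩
    obtain ⟨ε, hε, ha, hs⟩ := key y hyS
    have haL : x + ε • y ∈ L := L.add_mem hxL (L.smul_mem ε hyL)
    have hsL : x - ε • y ∈ L := L.sub_mem hxL (L.smul_mem ε hyL)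
    have hsum : (x + ε • y) + (x - ε • y) ∈ {y | ∃ c : ℝ, 0 ≤ c ∧ y = c • x} := by
      refine ⟨2, by norm_num, ?_⟩
      rw [two_smul]; abel
    obtain ⟨hmem, -⟩ := hray.2 _ ⟨ha, haL⟩ _ ⟨hs, hsL⟩ hsum
    obtain ⟨c, -, hc⟩ := hmem
    have : y = (ε⁻¹ * (c - 1)) • x := by
      have : ε • y = (c - 1) • x := by
        rw [sub_smul, one_smul, ← hc]; abel
      rw [mul_smul, ← this, smul_smul, inv_mul_cancel₀ (ne_of_gt hε), one_smul]
    rw [this]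
    exact Submodule.smul_mem _ _ (Submodule.mem_span_singleton_self x)
  -- dimension count
  have hnN : n ≤ N := by
    rw [← hn, ← hN]; exact Submodule.finrank_le L
  have hinf : Module.finrank ℝ (Submodule.span ℝ F₀ ⊓ L : Submodule ℝ H) ≤ 1 := by
    calc Module.finrank ℝ (Submodule.span ℝ F₀ ⊓ L : Submodule ℝ H)
        ≤ Module.finrank ℝ (Submodule.span ℝ {x}) := Submodule.finrank_mono hspan
      _ = 1 := finrank_span_singleton hx0
  have hsup : Module.finrank ℝ (Submodule.span ℝ F₀ ⊔ L : Submodule ℝ H) ≤ N := by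
    rw [← hN]; exact Submodule.finrank_le _
  have heq := Submodule.finrank_sup_add_finrank_inf_eq (Submodule.span ℝ F₀) L
  rw [hn] at heq
  omega
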